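/- In the finite options-framework model, the forward variable satisfies the recursion: for every trajectory of length t ≥ 1 and every option o ∈ O, F_t(o) = P(s_{t-1},a_{t-1},s_t)·∑_{o' ∈ O} μ_{o'}(s_{t-1},a_{t-1})·F_{t-1}(o')·(β_{o'}(s_t)·π(s_t,o) + (1−β_{o'}(s_t))·[o = o']), where [o = o'] is 1 if o = o' and 0 otherwise. -/

import Mathlib

/-!
Finite options-framework model.

We fix finite nonempty types `S` (states), `A` (actions), `O` (options), an initial
distribution `d0`, a policy over options `po`, option policies `mu`, termination
functions `beta`, and a transition function `P`.  A trajectory of length `n+1` is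
given by its states `s : ℕ → S` and actions `a : ℕ → A` (only indices `0..n+1`
resp. `0..n` are relevant).  Latent option sequences are `op : Fin (n+1) → O`
(for `o_0,…,o_n`) and termination sequences `τ : Fin n → Bool` (for `τ_1,…,τ_n`,
where `τ j` corresponds to time `j+1`).
-/

open Finset

namespace OptionsModel

variable {S A O : Type} [Fintype S] [Fintype A] [Fintype O]
  [Nonempty S] [Nonempty A] [Nonempty O] [DecidableEq O]

/-- Selection factor `c_{j+1}`: if the previous option `o_j = op j.castSucc` terminates
(`τ (j+1) = 1`) at `s_{j+1}`, a new option `o_{j+1} = op j.succ` is selected by the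
policy over options; otherwise the option continues. -/
def sel (po : S → O → ℝ) (beta : O → S → ℝ) (s : ℕ → S)
    {k : ℕ} (op : Fin (k + 1) → O) (τ : Fin k → Bool) (j : Fin k) : ℝ :=
  if τ j then beta (op j.castSucc) (s (j.1 + 1)) * po (s (j.1 + 1)) (op j.succ)
  else if op j.succ = op j.castSucc then 1 - beta (op j.castSucc) (s (j.1 + 1)) else 0

/-- Latent weight `w(h,(o_i),(τ_i))` of a trajectory of length `n+1` together with the
latent option sequence `o_0,…,o_n` and termination sequence `τ_1,…,τ_n`. -/
def w (d0 : S → ℝ) (po : S → O → ℝ) (mu : O → S → A → ℝ) (beta : O → S → ℝ)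
    (P : S → A → S → ℝ) (s : ℕ → S) (a : ℕ → A) {n : ℕ}
    (op : Fin (n + 1) → O) (τ : Fin n → Bool) : ℝ :=
  d0 (s 0) * po (s 0) (op 0) * mu (op 0) (s 0) (a 0)
    * (∏ j : Fin n, P (s j.1) (a j.1) (s (j.1 + 1)) * sel po beta s op τ j
        * mu (op j.succ) (s (j.1 + 1)) (a (j.1 + 1)))
    * P (s n) (a n) (s (n + 1))

/-- Trajectory probability `Pr(H_t = h)` for the trajectory of length `t = n+1`. -/
def prH (d0 : S → ℝ) (po : S → O → ℝ) (mu : O → S → A → ℝ) (beta : O → S → ℝ)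
    (P : S → A → S → ℝ) (s : ℕ → S) (a : ℕ → A) (n : ℕ) : ℝ :=
  ∑ op : Fin (n + 1) → O, ∑ τ : Fin n → Bool, w d0 po mu beta P s a op τ

/-- Joint termination probability `Pr(T_t = 1, H_t = h)` for `t = n+1`. -/
def prT1H (d0 : S → ℝ) (po : S → O → ℝ) (mu : O → S → A → ℝ) (beta : O → S → ℝ)
    (P : S → A → S → ℝ) (s : ℕ → S) (a : ℕ → A) (n : ℕ) : ℝ :=
  ∑ op : Fin (n + 1) → O, ∑ τ : Fin n → Bool,
    w d0 po mu beta P s a op τ * beta (op (Fin.last n)) (s (n + 1))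

/-- Joint no-termination probability `Pr(T_t = 0, H_t = h)` for `t = n+1`. -/
def prT0H (d0 : S → ℝ) (po : S → O → ℝ) (mu : O → S → A → ℝ) (beta : O → S → ℝ)
    (P : S → A → S → ℝ) (s : ℕ → S) (a : ℕ → A) (n : ℕ) : ℝ :=
  ∑ op : Fin (n + 1) → O, ∑ τ : Fin n → Bool,
    w d0 po mu beta P s a op τ * (1 - beta (op (Fin.last n)) (s (n + 1)))

/-- `Pr(O_{t-1} = o, H_t = h)` for `t = n+1`: the latent-weight sum restricted to option
sequences whose last option `o_{t-1}` equals `o`. -/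
def prOlastH (d0 : S → ℝ) (po : S → O → ℝ) (mu : O → S → A → ℝ) (beta : O → S → ℝ)
    (P : S → A → S → ℝ) (s : ℕ → S) (a : ℕ → A) (n : ℕ) (o : O) : ℝ :=
  ∑ op : Fin (n + 1) → O, ∑ τ : Fin n → Bool,
    if op (Fin.last n) = o then w d0 po mu beta P s a op τ else 0

/-- The forward variable `F_m(o)`: `F_0(o) = d0(s_0)·π(s_0,o)` and, for `m ≥ 1`, the sum
over option sequences `o_0,…,o_m` with `o_m = o` and termination sequences `τ_1,…,τ_m`
of `d0(s_0)·π(s_0,o_0)·(∏_{i=0}^{m-1} μ_{o_i}(s_i,a_i)·P(s_i,a_i,s_{i+1}))·(∏_{i=1}^m c_i)`. -/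
def fwd (d0 : S → ℝ) (po : S → O → ℝ) (mu : O → S → A → ℝ) (beta : O → S → ℝ)
    (P : S → A → S → ℝ) (s : ℕ → S) (a : ℕ → A) : ℕ → O → ℝ
  | 0, o => d0 (s 0) * po (s 0) o
  | m + 1, o =>
    ∑ op : Fin (m + 2) → O, ∑ τ : Fin (m + 1) → Bool,
      if op (Fin.last (m + 1)) = o then
        d0 (s 0) * po (s 0) (op 0)
          * (∏ j : Fin (m + 1),
              mu (op j.castSucc) (s j.1) (a j.1) * P (s j.1) (a j.1) (s (j.1 + 1)))
          * (∏ j : Fin (m + 1), sel po beta s op τ j)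
      else 0

/-- `Pr(O_t = o, T_t = 0, H_t = h_t)` for `t = n+1`: the `F_t(o)` sum restricted to
termination sequences with `τ_t = 0`. -/
def prOT0H (d0 : S → ℝ) (po : S → O → ℝ) (mu : O → S → A → ℝ) (beta : O → S → ℝ)
    (P : S → A → S → ℝ) (s : ℕ → S) (a : ℕ → A) (n : ℕ) (o : O) : ℝ :=
  ∑ op : Fin (n + 2) → O, ∑ τ : Fin (n + 1) → Bool,
    if op (Fin.last (n + 1)) = o ∧ τ (Fin.last n) = false then
      d0 (s 0) * po (s 0) (op 0)
        * (∏ j : Fin (n + 1),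
            mu (op j.castSucc) (s j.1) (a j.1) * P (s j.1) (a j.1) (s (j.1 + 1)))
        * (∏ j : Fin (n + 1), sel po beta s op τ j)
    else 0

/-- The recursive function `f(h,o,i)` of Theorem 2: `f(h,o,i) = 1` for `i ≥ t` and
otherwise the termination/continuation recursion. -/
def fRec (po : S → O → ℝ) (mu : O → S → A → ℝ) (beta : O → S → ℝ)
    (s : ℕ → S) (a : ℕ → A) (t : ℕ) (o : O) (i : ℕ) : ℝ :=
  if h : t ≤ i then 1
  else
    beta o (s i) * (∑ o' : O, po (s i) o' * mu o' (s i) (a i) * fRec po mu beta s a t o' (i + 1))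
      + (1 - beta o (s i)) * mu o (s i) (a i) * fRec po mu beta s a t o (i + 1)
termination_by t - i
decreasing_by all_goals omega

/-- The option active at time `i + j - 1` just before choosing `o_{i+j}`: it is `o` when
`j = 0` (the given previous option) and `op (j-1)` otherwise. -/
def prevOp {k : ℕ} (o : O) (op : Fin k → O) (j : Fin k) : O :=
  if _ : j.1 = 0 then o else op ⟨j.1 - 1, Nat.lt_of_le_of_lt (Nat.sub_le _ _) j.2⟩

/-- Suffix probability `G(h,o,i)` for `1 ≤ i ≤ t`: the probability of generating
`(s_i,a_i,…,s_t)` given previous state `s_{i-1}`, active option `o` and previous action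
`a_{i-1}`.  For `i = t` it is `P(s_{t-1},a_{t-1},s_t)`; for `i < t` it is the sum over
latent option sequences `o_i,…,o_{t-1}` and termination indicators `τ_i,…,τ_{t-1}`
(with `o_{i-1} := o`) of `(∏_{j=i}^{t-1} P(s_{j-1},a_{j-1},s_j)·c_j·μ_{o_j}(s_j,a_j))
· P(s_{t-1},a_{t-1},s_t)`. -/
def G (po : S → O → ℝ) (mu : O → S → A → ℝ) (beta : O → S → ℝ)
    (P : S → A → S → ℝ) (s : ℕ → S) (a : ℕ → A) (t i : ℕ) (o : O) : ℝ :=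
  if i < t then
    ∑ op : Fin (t - i) → O, ∑ τ : Fin (t - i) → Bool,
      (∏ j : Fin (t - i),
          P (s (i + j.1 - 1)) (a (i + j.1 - 1)) (s (i + j.1))
            * (if τ j then
                beta (prevOp o op j) (s (i + j.1)) * po (s (i + j.1)) (op j)
              else if op j = prevOp o op j then 1 - beta (prevOp o op j) (s (i + j.1))
              else 0)
            * mu (op j) (s (i + j.1)) (a (i + j.1)))
        * P (s (t - 1)) (a (t - 1)) (s t)
  else P (s (t - 1)) (a (t - 1)) (s t)

variable (d0 : S → ℝ) (po : S → O → ℝ) (mu : O → S → A → ℝ)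
  (beta : O → S → ℝ) (P : S → A → S → ℝ) (s : ℕ → S) (a : ℕ → A)

-- now the aux material
lemma sum_snoc {α M : Type*} [Fintype α] [AddCommMonoid M] {n : ℕ} (f : (Fin (n+1) → α) → M) :
    ∑ g : Fin (n+1) → α, f g = ∑ x : α, ∑ g : Fin n → α, f (Fin.snoc g x) := by
  rw [← (Fin.snocEquiv (fun _ => α)).sum_comp f, Fintype.sum_prod_type]
  rfl

set_option linter.unusedSectionVars false

lemma sel_snoc_castSucc (po : S → O → ℝ) (beta : O → S → ℝ) (s : ℕ → S)
    {n : ℕ} (op' : Fin (n+1) → O) (oL : O) (τ' : Fin n → Bool) (b : Bool) (j : Fin n) :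
    sel po beta s (Fin.snoc op' oL) (Fin.snoc τ' b) j.castSucc = sel po beta s op' τ' j := by
  simp [sel, Fin.succ_castSucc, Fin.snoc_castSucc, -Fin.castSucc_succ]

lemma sel_snoc_last (po : S → O → ℝ) (beta : O → S → ℝ) (s : ℕ → S)
    {n : ℕ} (op' : Fin (n+1) → O) (oL : O) (τ' : Fin n → Bool) (b : Bool) :
    sel po beta s (Fin.snoc op' oL) (Fin.snoc τ' b) (Fin.last n) =
      if b then beta (op' (Fin.last n)) (s (n+1)) * po (s (n+1)) oL
      else if oL = op' (Fin.last n) then 1 - beta (op' (Fin.last n)) (s (n+1)) else 0 := by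
  have h1 : (Fin.last n).succ = Fin.last (n+1) := Fin.succ_last n
  simp [sel, h1, Fin.snoc_last, Fin.snoc_castSucc]

def core (d0 : S → ℝ) (po : S → O → ℝ) (mu : O → S → A → ℝ) (beta : O → S → ℝ)
    (P : S → A → S → ℝ) (s : ℕ → S) (a : ℕ → A) {n : ℕ}
    (op : Fin (n+1) → O) (τ : Fin n → Bool) : ℝ :=
  d0 (s 0) * po (s 0) (op 0)
    * (∏ j : Fin n, mu (op j.castSucc) (s j.1) (a j.1) * P (s j.1) (a j.1) (s (j.1+1)))
    * (∏ j : Fin n, sel po beta s op τ j)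

lemma fwd_eq (n : ℕ) (o' : O) :
    fwd d0 po mu beta P s a n o' =
      ∑ op : Fin (n+1) → O, ∑ τ : Fin n → Bool,
        if op (Fin.last n) = o' then core d0 po mu beta P s a op τ else 0 := by
  cases n with
  | zero =>
      rw [show fwd d0 po mu beta P s a 0 o' = d0 (s 0) * po (s 0) o' from rfl,
        ← (Equiv.funUnique (Fin 1) O).symm.sum_comp]
      simp [core, Fin.last]
  | succ m => rfl

lemma core_snoc {n : ℕ} (op' : Fin (n+1) → O) (oL : O) (τ' : Fin n → Bool) (b : Bool) :
    core d0 po mu beta P s a (Fin.snoc op' oL) (Fin.snoc τ' b) =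
      core d0 po mu beta P s a op' τ'
        * (mu (op' (Fin.last n)) (s n) (a n) * P (s n) (a n) (s (n+1)))
        * (if b then beta (op' (Fin.last n)) (s (n+1)) * po (s (n+1)) oL
           else if oL = op' (Fin.last n) then 1 - beta (op' (Fin.last n)) (s (n+1)) else 0) := by
  unfold core
  rw [Fin.prod_univ_castSucc, Fin.prod_univ_castSucc]
  simp only [sel_snoc_castSucc, sel_snoc_last, Fin.snoc_castSucc, Fin.coe_castSucc,
    Fin.val_last]
  have h0 : (Fin.snoc op' oL : Fin (n+2) → O) 0 = op' 0 := by
    have : (0 : Fin (n+2)) = Fin.castSucc 0 := rfl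
    rw [this, Fin.snoc_castSucc]
  rw [h0]
  ring


/-- The forward-variable recursion: for every trajectory of length
`t = n+1 ≥ 1` and every option `o`,
`F_t(o) = P(s_{t-1},a_{t-1},s_t)·∑_o' μ_o'(s_{t-1},a_{t-1})·F_{t-1}(o')·
(β_o'(s_t)·π(s_t,o) + (1−β_o'(s_t))·[o = o'])`. -/
theorem forward_recursion
    (hd0 : ∀ x, 0 ≤ d0 x) (hd0s : ∑ x : S, d0 x = 1)
    (hpo : ∀ x o, 0 ≤ po x o) (hpos : ∀ x : S, ∑ o : O, po x o = 1)
    (hmu : ∀ o x u, 0 ≤ mu o x u) (hmus : ∀ o x, ∑ u : A, mu o x u = 1)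
    (hbeta : ∀ o x, 0 ≤ beta o x ∧ beta o x ≤ 1)
    (hP : ∀ x u y, 0 ≤ P x u y) (hPs : ∀ x u, ∑ y : S, P x u y = 1)
    (n : ℕ) (o : O) :
    fwd d0 po mu beta P s a (n + 1) o =
      P (s n) (a n) (s (n + 1)) *
        ∑ o' : O, mu o' (s n) (a n) * fwd d0 po mu beta P s a n o' *
          (beta o' (s (n + 1)) * po (s (n + 1)) o +
            (1 - beta o' (s (n + 1))) * (if o = o' then 1 else 0)) := by
  have lhs1 : fwd d0 po mu beta P s a (n + 1) o =
      ∑ op : Fin (n+1) → O, ∑ τ' : Fin n → Bool,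
        core d0 po mu beta P s a op τ'
          * (mu (op (Fin.last n)) (s n) (a n) * P (s n) (a n) (s (n+1)))
          * ((beta (op (Fin.last n)) (s (n+1)) * po (s (n+1)) o)
            + (if o = op (Fin.last n) then 1 - beta (op (Fin.last n)) (s (n+1)) else 0)) := by
    calc fwd d0 po mu beta P s a (n + 1) o
        = ∑ oL : O, ∑ op : Fin (n+1) → O, ∑ τ : Fin (n+1) → Bool,
            (if oL = o then core d0 po mu beta P s a (Fin.snoc op oL) τ else 0) := by
          rw [fwd_eq, sum_snoc]
          simp only [Fin.snoc_last]
      _ = ∑ oL : O, if oL = o then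
            (∑ op : Fin (n+1) → O, ∑ τ : Fin (n+1) → Bool,
              core d0 po mu beta P s a (Fin.snoc op oL) τ) else 0 := by
          refine Finset.sum_congr rfl fun oL _ => ?_
          split_ifs with h <;> simp
      _ = ∑ op : Fin (n+1) → O, ∑ τ : Fin (n+1) → Bool,
            core d0 po mu beta P s a (Fin.snoc op o) τ := by simp
      _ = _ := by
          refine Finset.sum_congr rfl fun op _ => ?_
          rw [sum_snoc, Fintype.sum_bool, ← Finset.sum_add_distrib]
          refine Finset.sum_congr rfl fun τ' _ => ?_
          rw [core_snoc, core_snoc]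
          simp only [if_true, if_false, Bool.false_eq_true]
          ring
  have rhs1 : (P (s n) (a n) (s (n + 1)) *
        ∑ o' : O, mu o' (s n) (a n) * fwd d0 po mu beta P s a n o' *
          (beta o' (s (n + 1)) * po (s (n + 1)) o +
            (1 - beta o' (s (n + 1))) * (if o = o' then 1 else 0))) =
      ∑ op : Fin (n+1) → O, ∑ τ' : Fin n → Bool,
        P (s n) (a n) (s (n+1)) *
          (mu (op (Fin.last n)) (s n) (a n) * core d0 po mu beta P s a op τ' *
            (beta (op (Fin.last n)) (s (n + 1)) * po (s (n + 1)) o +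
              (1 - beta (op (Fin.last n)) (s (n + 1))) *
                (if o = op (Fin.last n) then 1 else 0))) := by
    calc _
        = ∑ o' : O, ∑ op : Fin (n+1) → O, ∑ τ' : Fin n → Bool,
            (if op (Fin.last n) = o' then
              P (s n) (a n) (s (n+1)) *
                (mu o' (s n) (a n) * core d0 po mu beta P s a op τ' *
                  (beta o' (s (n + 1)) * po (s (n + 1)) o +
                    (1 - beta o' (s (n + 1))) * (if o = o' then 1 else 0)))
             else 0) := by
          rw [Finset.mul_sum]
          refine Finset.sum_congr rfl fun o' _ => ?_
          rw [fwd_eq]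
          simp only [Finset.mul_sum, Finset.sum_mul, mul_ite, ite_mul, mul_zero, zero_mul]
      _ = ∑ op : Fin (n+1) → O, ∑ τ' : Fin n → Bool, ∑ o' : O,
            (if op (Fin.last n) = o' then
              P (s n) (a n) (s (n+1)) *
                (mu o' (s n) (a n) * core d0 po mu beta P s a op τ' *
                  (beta o' (s (n + 1)) * po (s (n + 1)) o +
                    (1 - beta o' (s (n + 1))) * (if o = o' then 1 else 0)))
             else 0) := by
          rw [Finset.sum_comm]
          exact Finset.sum_congr rfl fun op _ => Finset.sum_comm
      _ = _ := by
          refine Finset.sum_congr rfl fun op _ => Finset.sum_congr rfl fun τ' _ => ?_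
          rw [Finset.sum_ite_eq]
          simp
  rw [lhs1, rhs1]
  refine Finset.sum_congr rfl fun op _ => Finset.sum_congr rfl fun τ' _ => ?_
  by_cases h : o = op (Fin.last n) <;> simp [h] <;> ring


end OptionsModel
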